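/- Let A ∈ B(E,F) have generalized inverse A⁺, dim E = ∞ permitted, and suppose rank A = k < ∞. If T ∈ B(E,F) satisfies ‖T − A‖ < ‖A⁺‖⁻¹ and R(T) ∩ N(A⁺) = {0}, then rank T = k. -/

import Mathlib

open ContinuousLinearMap

variable {E F : Type*} [NormedAddCommGroup E] [NormedSpace ℝ E] [CompleteSpace E]
  [NormedAddCommGroup F] [NormedSpace ℝ F] [CompleteSpace F]

/-- If `range f` is disjoint from `ker g`, then `range f ≃ range (g ∘ f)`. -/
private lemma range_comp_equiv_aux {M N P : Type*} [AddCommGroup M] [Module ℝ M]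
    [AddCommGroup N] [Module ℝ N] [AddCommGroup P] [Module ℝ P]
    (f : M →ₗ[ℝ] N) (g : N →ₗ[ℝ] P)
    (h : LinearMap.range f ⊓ LinearMap.ker g = ⊥) :
    Nonempty ((LinearMap.range f) ≃ₗ[ℝ] LinearMap.range (g ∘ₗ f)) := by
  have hinj : Function.Injective (g.domRestrict (LinearMap.range f)) := by
    rw [← LinearMap.ker_eq_bot]
    ext x
    simp only [LinearMap.mem_ker, LinearMap.domRestrict_apply, Submodule.mem_bot]
    constructor
    · intro hx
      have hmem : (x : N) ∈ LinearMap.range f ⊓ LinearMap.ker g := ⟨x.2, hx⟩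
      rw [h] at hmem
      exact Subtype.ext hmem
    · intro hx; rw [hx]; simp
  have e1 := LinearEquiv.ofInjective _ hinj
  have hr : LinearMap.range (g.domRestrict (LinearMap.range f))
      = LinearMap.range (g ∘ₗ f) := by
    rw [LinearMap.range_domRestrict, LinearMap.range_comp]
  exact ⟨e1.trans (LinearEquiv.ofEq _ _ hr)⟩

set_option maxHeartbeats 1000000 in
theorem stmt8 (A T : E →L[ℝ] F) (Ap : F →L[ℝ] E)
    (h1 : A ∘L (Ap ∘L A) = A) (h2 : Ap ∘L (A ∘L Ap) = Ap)
    (k : ℕ) (hfinA : FiniteDimensional ℝ (LinearMap.range (A : E →ₗ[ℝ] F)))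
    (hrankA : Module.finrank ℝ (LinearMap.range (A : E →ₗ[ℝ] F)) = k)
    (hT : ‖T - A‖ < ‖Ap‖⁻¹)
    (hR : LinearMap.range (T : E →ₗ[ℝ] F) ⊓ LinearMap.ker (Ap : F →ₗ[ℝ] E) = ⊥) :
    FiniteDimensional ℝ (LinearMap.range (T : E →ₗ[ℝ] F)) ∧
      Module.finrank ℝ (LinearMap.range (T : E →ₗ[ℝ] F)) = k := by
  -- pointwise identities
  have h1' : ∀ x, A (Ap (A x)) = A x := fun x => congrArg (fun S => S x) h1
  have h2' : ∀ y, Ap (A (Ap y)) = Ap y := fun y => congrArg (fun S => S y) h2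
  -- ‖Ap‖ > 0
  have hAp_pos : 0 < ‖Ap‖ := by
    rcases lt_or_eq_of_le (norm_nonneg Ap) with h | h
    · exact h
    · exfalso
      rw [← h, inv_zero] at hT
      exact absurd hT (not_lt.2 (norm_nonneg _))
  -- the key submodule M = range (Ap ∘L A)
  set M : Submodule ℝ E := LinearMap.range ((Ap : F →ₗ[ℝ] E) ∘ₗ (A : E →ₗ[ℝ] F)) with hM
  -- range A ⊓ ker Ap = ⊥
  have hdisjA : LinearMap.range (A : E →ₗ[ℝ] F) ⊓ LinearMap.ker (Ap : F →ₗ[ℝ] E) = ⊥ := by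
    rw [Submodule.eq_bot_iff]
    rintro x ⟨⟨y, rfl⟩, hker⟩
    have : A y = A (Ap (A y)) := (h1' y).symm
    rw [show Ap (A y) = 0 from hker] at this
    simpa using this
  -- range A ≃ M
  obtain ⟨eA⟩ := range_comp_equiv_aux (A : E →ₗ[ℝ] F) (Ap : F →ₗ[ℝ] E) hdisjA
  haveI hfinA' : FiniteDimensional ℝ (LinearMap.range (A : E →ₗ[ℝ] F)) := hfinA
  have hfinM : FiniteDimensional ℝ M := Module.Finite.equiv eA
  have hrankM : Module.finrank ℝ M = k := eA.symm.finrank_eq.trans hrankA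
  -- range T ≃ range (Ap ∘ T)
  obtain ⟨eT⟩ := range_comp_equiv_aux (T : E →ₗ[ℝ] F) (Ap : F →ₗ[ℝ] E) hR
  -- range (Ap ∘ T) ≤ M
  have hle : LinearMap.range ((Ap : F →ₗ[ℝ] E) ∘ₗ (T : E →ₗ[ℝ] F)) ≤ M := by
    rintro x ⟨y, rfl⟩
    exact ⟨Ap (T y), h2' (T y)⟩
  have hfinApT : FiniteDimensional ℝ
      (LinearMap.range ((Ap : F →ₗ[ℝ] E) ∘ₗ (T : E →ₗ[ℝ] F))) :=
    Submodule.finiteDimensional_of_le hle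
  have hfinT : FiniteDimensional ℝ (LinearMap.range (T : E →ₗ[ℝ] F)) := Module.Finite.equiv eT.symm
  refine ⟨hfinT, ?_⟩
  -- upper bound
  have hub : Module.finrank ℝ
      (LinearMap.range ((Ap : F →ₗ[ℝ] E) ∘ₗ (T : E →ₗ[ℝ] F))) ≤ k := by
    rw [← hrankM]
    exact Submodule.finrank_mono hle
  -- lower bound via injectivity of Ap ∘ T on M
  have hc : ‖Ap‖ * ‖T - A‖ < 1 := by
    have := (mul_lt_mul_iff_right₀ hAp_pos).2 hT
    rwa [mul_inv_cancel₀ (ne_of_gt hAp_pos)] at this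
  have hinjM : ∀ x ∈ M, Ap (T x) = 0 → x = 0 := by
    rintro x ⟨y, rfl⟩ hx
    simp only [LinearMap.coe_comp, Function.comp_apply, ContinuousLinearMap.coe_coe] at hx ⊢
    set z := Ap (A y) with hz
    -- Ap (T z) = z + Ap ((T - A) z)
    have hproj : Ap (A z) = z := h2' (A y)
    have key : Ap (T z) = z + Ap ((T - A) z) := by
      have : (T - A) z = T z - A z := by simp
      rw [this, map_sub, hproj]; abel
    rw [key] at hx
    -- so z = - Ap ((T-A) z), hence ‖z‖ ≤ ‖Ap‖‖T-A‖‖z‖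
    have hzeq : z = -Ap ((T - A) z) := eq_neg_of_add_eq_zero_left hx
    have hnorm : ‖z‖ ≤ ‖Ap‖ * ‖T - A‖ * ‖z‖ := by
      calc ‖z‖ = ‖-Ap ((T - A) z)‖ := by rw [← hzeq]
        _ = ‖Ap ((T - A) z)‖ := norm_neg _
        _ ≤ ‖Ap‖ * ‖(T - A) z‖ := Ap.le_opNorm _
        _ ≤ ‖Ap‖ * (‖T - A‖ * ‖z‖) := by
            exact mul_le_mul_of_nonneg_left ((T - A).le_opNorm z) (norm_nonneg _)
        _ = ‖Ap‖ * ‖T - A‖ * ‖z‖ := by ring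
    have : z = 0 := by
      by_contra hzne
      have hzpos : 0 < ‖z‖ := norm_pos_iff.2 hzne
      nlinarith [hnorm, hc, hzpos]
    exact this
  -- restriction of Ap ∘ T to M is injective
  have hinj : Function.Injective
      ((((Ap : F →ₗ[ℝ] E) ∘ₗ (T : E →ₗ[ℝ] F))).domRestrict M) := by
    rw [← LinearMap.ker_eq_bot]
    rw [Submodule.eq_bot_iff]
    rintro x hx
    simp only [LinearMap.mem_ker, LinearMap.domRestrict_apply, LinearMap.coe_comp,
      Function.comp_apply, ContinuousLinearMap.coe_coe] at hx
    exact Subtype.ext (hinjM x x.2 hx)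
  have eM := LinearEquiv.ofInjective _ hinj
  have hlb : k ≤ Module.finrank ℝ
      (LinearMap.range ((Ap : F →ₗ[ℝ] E) ∘ₗ (T : E →ₗ[ℝ] F))) := by
    have hr : LinearMap.range ((((Ap : F →ₗ[ℝ] E) ∘ₗ (T : E →ₗ[ℝ] F))).domRestrict M)
        ≤ LinearMap.range ((Ap : F →ₗ[ℝ] E) ∘ₗ (T : E →ₗ[ℝ] F)) :=
      LinearMap.range_domRestrict_le_range _ _
    have h1 : Module.finrank ℝ
        (LinearMap.range ((((Ap : F →ₗ[ℝ] E) ∘ₗ (T : E →ₗ[ℝ] F))).domRestrict M))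
        ≤ Module.finrank ℝ (LinearMap.range ((Ap : F →ₗ[ℝ] E) ∘ₗ (T : E →ₗ[ℝ] F))) :=
      Submodule.finrank_mono hr
    have h2 : Module.finrank ℝ M = Module.finrank ℝ
        (LinearMap.range ((((Ap : F →ₗ[ℝ] E) ∘ₗ (T : E →ₗ[ℝ] F))).domRestrict M)) :=
      eM.finrank_eq
    omega
  have : Module.finrank ℝ
      (LinearMap.range ((Ap : F →ₗ[ℝ] E) ∘ₗ (T : E →ₗ[ℝ] F))) = k :=
    le_antisymm hub hlb
  exact eT.finrank_eq.trans this
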